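/- Let n ≥ 1, let A be an n×n complex matrix, and let a > 0 be such that every eigenvalue μ of A (every μ in the spectrum of A over ℂ) satisfies Re(μ) < −a. Then there exists a constant c > 0 such that for all t ≥ 0, ‖exp(t·A)‖ ≤ c·e^{−a·t}, where ‖·‖ is the operator norm (any fixed matrix norm) and exp is the matrix exponential. -/

import Mathlib

open Matrix

attribute [local instance] Matrix.linftyOpNormedAddCommGroup

section Aux

open Polynomial NormedSpace Filter

attribute [local instance] Matrix.linftyOpNormedRing Matrix.linftyOpNormedAlgebra

variable {n : ℕ}

lemma aux_exists_poly (A : Matrix (Fin n) (Fin n) ℂ) :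
    ∃ p : ℂ[X], Polynomial.aeval A p = NormedSpace.exp A := by
  set S : Subalgebra ℂ (Matrix (Fin n) (Fin n) ℂ) := (Polynomial.aeval A).range with hS
  have hA : A ∈ S := ⟨Polynomial.X, by simp⟩
  have hclosed : IsClosed (S : Set (Matrix (Fin n) (Fin n) ℂ)) := by
    have := Submodule.closed_of_finiteDimensional (Subalgebra.toSubmodule S)
    simpa using this
  have hsum : HasSum (fun k : ℕ => (k.factorial⁻¹ : ℂ) • A ^ k) (NormedSpace.exp A) :=
    NormedSpace.exp_series_hasSum_exp' A
  have hmem : NormedSpace.exp A ∈ S := by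
    refine hclosed.mem_of_tendsto hsum (Filter.Eventually.of_forall fun s => ?_)
    exact sum_mem fun k _ => S.smul_mem (S.pow_mem hA k) _
  exact hmem

lemma aux_eigenvector (A : Matrix (Fin n) (Fin n) ℂ) {μ : ℂ} (hμ : μ ∈ spectrum ℂ A) :
    ∃ v : Fin n → ℂ, v ≠ 0 ∧ A *ᵥ v = μ • v := by
  rw [spectrum.mem_iff] at hμ
  have hdet : ((algebraMap ℂ (Matrix (Fin n) (Fin n) ℂ) μ) - A).det = 0 := by
    by_contra h
    exact hμ ((Matrix.isUnit_iff_isUnit_det _).2 (isUnit_iff_ne_zero.2 h))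
  obtain ⟨v, hv0, hv⟩ := Matrix.exists_mulVec_eq_zero_iff.2 hdet
  refine ⟨v, hv0, ?_⟩
  rw [sub_mulVec, Algebra.algebraMap_eq_smul_one, smul_mulVec, one_mulVec] at hv
  exact (sub_eq_zero.mp hv).symm

lemma aux_aeval_mulVec (A : Matrix (Fin n) (Fin n) ℂ) {μ : ℂ} {v : Fin n → ℂ}
    (hv : A *ᵥ v = μ • v) (q : ℂ[X]) :
    (Polynomial.aeval A q) *ᵥ v = q.eval μ • v := by
  have hpow : ∀ k : ℕ, (A ^ k) *ᵥ v = μ ^ k • v := by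
    intro k
    induction k with
    | zero => simp [Matrix.one_mulVec]
    | succ k ih =>
      rw [pow_succ', ← Matrix.mulVec_mulVec, ih, Matrix.mulVec_smul, hv, smul_smul, ← pow_succ]
  induction q using Polynomial.induction_on' with
  | add p q hp hq => rw [map_add, Matrix.add_mulVec, hp, hq, Polynomial.eval_add, add_smul]
  | monomial k c =>
    rw [Polynomial.aeval_monomial, Polynomial.eval_monomial, Algebra.algebraMap_eq_smul_one,
      smul_mul_assoc, one_mul, Matrix.smul_mulVec, hpow, smul_smul]

lemma aux_exp_mulVec (A : Matrix (Fin n) (Fin n) ℂ) {μ : ℂ} {v : Fin n → ℂ}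
    (hv : A *ᵥ v = μ • v) :
    (NormedSpace.exp A) *ᵥ v = Complex.exp μ • v := by
  have hsum : HasSum (fun k : ℕ => (k.factorial⁻¹ : ℂ) • A ^ k) (NormedSpace.exp A) :=
    NormedSpace.exp_series_hasSum_exp' A
  let φ : Matrix (Fin n) (Fin n) ℂ →ₗ[ℂ] (Fin n → ℂ) :=
    { toFun := fun B => B *ᵥ v
      map_add' := fun B C => Matrix.add_mulVec B C v
      map_smul' := fun c B => Matrix.smul_mulVec c B v }
  have hφ : Continuous φ := φ.continuous_of_finiteDimensional
  have h2 := hsum.map φ hφ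
  have hterm : ∀ k : ℕ, φ ((k.factorial⁻¹ : ℂ) • A ^ k) = ((k.factorial⁻¹ : ℂ) * μ ^ k) • v := by
    intro k
    have h5 : φ ((k.factorial⁻¹ : ℂ) • A ^ k) = (k.factorial⁻¹ : ℂ) • ((A ^ k) *ᵥ v) :=
      φ.map_smul _ _
    have hpow : (A ^ k) *ᵥ v = μ ^ k • v := by
      have h6 := aux_aeval_mulVec A hv (Polynomial.X ^ k)
      rwa [map_pow, Polynomial.aeval_X, Polynomial.eval_pow, Polynomial.eval_X] at h6
    rw [h5, hpow, smul_smul]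
  have h2' : HasSum (fun k : ℕ => ((k.factorial⁻¹ : ℂ) * μ ^ k) • v) (φ (NormedSpace.exp A)) := by
    simpa only [Function.comp_def, hterm] using h2
  have h4 : HasSum (fun k : ℕ => (k.factorial⁻¹ : ℂ) * μ ^ k) (Complex.exp μ) := by
    simpa [Complex.exp_eq_exp_ℂ, smul_eq_mul] using
      NormedSpace.exp_series_hasSum_exp' (𝕂 := ℂ) μ
  exact h2'.unique (h4.smul_const v)

lemma aux_spectrum_exp (hn : 1 ≤ n) (A : Matrix (Fin n) (Fin n) ℂ) :
    ∀ μ ∈ spectrum ℂ (NormedSpace.exp A), ∃ z ∈ spectrum ℂ A, μ = Complex.exp z := by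
  haveI : Nonempty (Fin n) := ⟨⟨0, hn⟩⟩
  haveI : Nontrivial (Matrix (Fin n) (Fin n) ℂ) := inferInstance
  intro μ hμ
  obtain ⟨p, hp⟩ := aux_exists_poly A
  have hev : ∀ z ∈ spectrum ℂ A, p.eval z = Complex.exp z := by
    intro z hz
    obtain ⟨v, hv0, hv⟩ := aux_eigenvector A hz
    have h1 := aux_aeval_mulVec A hv p
    rw [hp, aux_exp_mulVec A hv] at h1
    obtain ⟨i, hi⟩ := Function.ne_iff.mp hv0
    have h2 := congr_fun h1 i
    simp only [Pi.smul_apply, smul_eq_mul] at h2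
    exact mul_right_cancel₀ (by simpa using hi) h2.symm
  have hdet : (Polynomial.aeval A (Polynomial.C μ - p)).det = 0 := by
    have heq : Polynomial.aeval A (Polynomial.C μ - p)
        = algebraMap ℂ (Matrix (Fin n) (Fin n) ℂ) μ - NormedSpace.exp A := by
      rw [map_sub, Polynomial.aeval_C, hp]
    rw [heq]
    by_contra h
    exact (spectrum.mem_iff.mp hμ) ((Matrix.isUnit_iff_isUnit_det _).2 (isUnit_iff_ne_zero.2 h))
  by_cases hq : Polynomial.C μ - p = 0
  · obtain ⟨z, hz⟩ := spectrum.nonempty A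
    refine ⟨z, hz, ?_⟩
    have hpz := hev z hz
    have : p = Polynomial.C μ := (sub_eq_zero.mp hq).symm
    rw [this, Polynomial.eval_C] at hpz
    exact hpz
  · set q : Polynomial ℂ := Polynomial.C μ - p with hqdef
    have hfac : q = Polynomial.C q.leadingCoeff * (q.roots.map fun s => Polynomial.X - Polynomial.C s).prod :=
      Polynomial.Splits.eq_prod_roots (IsAlgClosed.splits q)
    set l : List ℂ := q.roots.toList with hl
    have hlq : (l : Multiset ℂ) = q.roots := Multiset.coe_toList _
    have hfac' : q = Polynomial.C q.leadingCoeff * (l.map fun s => Polynomial.X - Polynomial.C s).prod := by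
      conv_lhs => rw [hfac]
      rw [← hlq, Multiset.map_coe, Multiset.prod_coe]
    have hdet3 : (Polynomial.aeval A q).det
        = q.leadingCoeff ^ n * ((l.map fun s => (A - s • (1 : Matrix (Fin n) (Fin n) ℂ)).det).prod) := by
      conv_lhs => rw [hfac']
      rw [_root_.map_mul, Polynomial.aeval_C, Algebra.algebraMap_eq_smul_one, smul_mul_assoc,
        one_mul, Matrix.det_smul, Fintype.card_fin]
      congr 1
      rw [map_list_prod (Polynomial.aeval A), ← Matrix.coe_detMonoidHom,
        ← List.prod_hom _ (Matrix.detMonoidHom : Matrix (Fin n) (Fin n) ℂ →* ℂ), List.map_map, List.map_map]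
      congr 1
      refine List.map_congr_left fun s _ => ?_
      simp [Function.comp, Algebra.algebraMap_eq_smul_one]
    rw [hdet3] at hdet
    have hlc : q.leadingCoeff ≠ 0 := Polynomial.leadingCoeff_ne_zero.mpr hq
    have hprod : ((l.map fun s => (A - s • (1 : Matrix (Fin n) (Fin n) ℂ)).det).prod) = 0 := by
      by_contra h
      exact (mul_ne_zero (pow_ne_zero n hlc) h) hdet
    have h0 : (0 : ℂ) ∈ l.map fun s => (A - s • (1 : Matrix (Fin n) (Fin n) ℂ)).det :=
      List.prod_eq_zero_iff.mp hprod
    obtain ⟨s, hsl, hds⟩ := List.mem_map.mp h0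
    have hs : s ∈ q.roots := by rw [← hlq] at *; exact hsl
    have hsA : s ∈ spectrum ℂ A := by
      rw [spectrum.mem_iff]
      intro hunit
      have h1 := (Matrix.isUnit_iff_isUnit_det _).mp hunit
      have heq : algebraMap ℂ (Matrix (Fin n) (Fin n) ℂ) s - A
          = -(A - s • (1 : Matrix (Fin n) (Fin n) ℂ)) := by
        rw [Algebra.algebraMap_eq_smul_one]; abel
      rw [heq, Matrix.det_neg, hds, mul_zero] at h1
      exact not_isUnit_zero h1
    refine ⟨s, hsA, ?_⟩
    have hroot : q.eval s = 0 := by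
      have := Polynomial.isRoot_of_mem_roots hs
      exact this
    have hms : μ - p.eval s = 0 := by
      simpa [hqdef] using hroot
    rw [← hev s hsA]
    exact sub_eq_zero.mp hms

lemma aux_norm_exp_le (hn : 1 ≤ n) (x : Matrix (Fin n) (Fin n) ℂ) :
    ‖NormedSpace.exp x‖ ≤ Real.exp ‖x‖ := by
  haveI : Nonempty (Fin n) := ⟨⟨0, hn⟩⟩
  rw [NormedSpace.exp_eq_tsum ℂ]
  have h1 : ∀ k : ℕ, ‖((k.factorial : ℂ))⁻¹ • x ^ k‖ ≤ ‖x‖ ^ k / (k.factorial : ℝ) := by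
    intro k
    rw [norm_smul, div_eq_inv_mul]
    gcongr
    · simp
    · cases Nat.eq_zero_or_pos k with
      | inl h => simp [h]
      | inr h => exact norm_pow_le' x h
  calc ‖∑' k : ℕ, ((k.factorial : ℂ))⁻¹ • x ^ k‖
      ≤ ∑' k : ℕ, ‖((k.factorial : ℂ))⁻¹ • x ^ k‖ :=
        norm_tsum_le_tsum_norm (NormedSpace.norm_expSeries_summable' x)
    _ ≤ ∑' k : ℕ, ‖x‖ ^ k / (k.factorial : ℝ) := by
        refine Summable.tsum_le_tsum h1 (NormedSpace.norm_expSeries_summable' x) ?_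
        exact Real.summable_pow_div_factorial ‖x‖
    _ = Real.exp ‖x‖ := by
        rw [Real.exp_eq_exp_ℝ, NormedSpace.exp_eq_tsum_div]

lemma aux_pow_bound (hn : 1 ≤ n) (A : Matrix (Fin n) (Fin n) ℂ) (a : ℝ) (ha : 0 < a)
    (hspec : ∀ μ ∈ spectrum ℂ A, μ.re < -a) :
    ∃ C : ℝ, 1 ≤ C ∧ ∀ k : ℕ, ‖(NormedSpace.exp A) ^ k‖ ≤ C * Real.exp (-(a * k)) := by
  haveI : Nonempty (Fin n) := ⟨⟨0, hn⟩⟩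
  set B := NormedSpace.exp A with hB
  set r : NNReal := Real.toNNReal (Real.exp (-a)) with hr
  have hrpos : (0:ℝ) < Real.exp (-a) := Real.exp_pos _
  have hrr : (r : ℝ) = Real.exp (-a) := Real.coe_toNNReal _ hrpos.le
  have hρ : spectralRadius ℂ B < (r : ENNReal) := by
    apply spectrum.spectralRadius_lt_of_forall_lt
    intro z hz
    obtain ⟨s, hsA, rfl⟩ := aux_spectrum_exp hn A z hz
    have h1 : ‖Complex.exp s‖ < Real.exp (-a) := by
      rw [Complex.norm_exp]
      exact Real.exp_lt_exp.mpr (hspec s hsA)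
    rw [← NNReal.coe_lt_coe, coe_nnnorm, hrr]
    exact h1
  have hg := spectrum.pow_nnnorm_pow_one_div_tendsto_nhds_spectralRadius B
  have hev : ∀ᶠ k : ℕ in Filter.atTop, ((‖B ^ k‖₊ : ENNReal)) ^ (1/(k:ℝ)) < (r : ENNReal) :=
    hg.eventually_lt_const hρ
  obtain ⟨K, hK⟩ := Filter.eventually_atTop.mp hev
  have key : ∀ k : ℕ, 1 ≤ k → K ≤ k → ‖B ^ k‖ ≤ Real.exp (-(a*k)) := by
    intro k hk1 hkK
    have h2 := hK k hkK
    have hkne : (k:ℝ) ≠ 0 := by positivity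
    have h3 : ((‖B ^ k‖₊ : ENNReal)) ≤ (r : ENNReal) ^ (k:ℝ) := by
      have h4 := ENNReal.rpow_le_rpow h2.le (by positivity : (0:ℝ) ≤ (k:ℝ))
      rwa [← ENNReal.rpow_mul, one_div, inv_mul_cancel₀ hkne, ENNReal.rpow_one] at h4
    rw [← ENNReal.coe_rpow_of_nonneg r (by positivity), ENNReal.coe_le_coe] at h3
    have h4 : ‖B ^ k‖ ≤ (r:ℝ) ^ (k:ℝ) := by
      have h5 := NNReal.coe_le_coe.mpr h3
      rwa [NNReal.coe_rpow, coe_nnnorm] at h5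
    rw [hrr, Real.rpow_natCast] at h4
    calc ‖B ^ k‖ ≤ Real.exp (-a) ^ k := h4
      _ = Real.exp (-(a*k)) := by
          rw [← Real.exp_nat_mul]
          ring_nf
  refine ⟨1 + ∑ j ∈ Finset.range (K+1), ‖B ^ j‖ * Real.exp (a*j), le_add_of_nonneg_right (by positivity), ?_⟩
  intro k
  by_cases hk : K + 1 ≤ k
  · have h5 := key k (le_trans (Nat.le_add_left 1 K) hk) (le_trans (Nat.le_succ K) hk)
    have h6 : (0:ℝ) ≤ ∑ j ∈ Finset.range (K+1), ‖B ^ j‖ * Real.exp (a*j) := by positivity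
    nlinarith [Real.exp_pos (-(a*(k:ℝ)))]
  · push_neg at hk
    have hmem : k ∈ Finset.range (K+1) := Finset.mem_range.mpr hk
    have h5 : ‖B ^ k‖ * Real.exp (a*k) ≤ ∑ j ∈ Finset.range (K+1), ‖B ^ j‖ * Real.exp (a*j) :=
      Finset.single_le_sum (f := fun j : ℕ => ‖B ^ j‖ * Real.exp (a*j))
        (fun j _ => by positivity) hmem
    have h6 : ‖B ^ k‖ = (‖B ^ k‖ * Real.exp (a*k)) * Real.exp (-(a*k)) := by
      rw [mul_assoc, ← Real.exp_add]
      simp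
    rw [h6]
    have h7 : (0:ℝ) < Real.exp (-(a*(k:ℝ))) := Real.exp_pos _
    nlinarith

set_option maxHeartbeats 2000000 in
theorem aux_main (hn : 1 ≤ n) (A : Matrix (Fin n) (Fin n) ℂ)
    (a : ℝ) (ha : 0 < a) (hspec : ∀ μ ∈ spectrum ℂ A, μ.re < -a) :
    ∃ c : ℝ, 0 < c ∧ ∀ t : ℝ, 0 ≤ t →
      ‖NormedSpace.exp ((t : ℂ) • A)‖ ≤ c * Real.exp (-a * t) := by
  haveI : Nonempty (Fin n) := ⟨⟨0, hn⟩⟩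
  obtain ⟨C, hC, hCk⟩ := aux_pow_bound hn A a ha hspec
  have hC0 : 0 < C := lt_of_lt_of_le one_pos hC
  refine ⟨C * Real.exp ‖A‖ * Real.exp a, by positivity, fun t ht => ?_⟩
  set k := ⌊t⌋₊ with hk
  have hk1 : (k:ℝ) ≤ t := Nat.floor_le ht
  have hk2 : t < k + 1 := Nat.lt_floor_add_one t
  set s : ℝ := t - (k:ℝ) with hs
  have hs0 : 0 ≤ s := by rw [hs]; linarith
  have hs1 : s ≤ 1 := by rw [hs]; linarith
  have hcomm : Commute ((k:ℕ) • A) ((s:ℂ) • A) :=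
    ((Commute.refl A).smul_left k).smul_right _
  have hsplit : (t:ℂ) • A = ((k:ℕ) • A) + ((s:ℂ) • A) := by
    rw [← Nat.cast_smul_eq_nsmul ℂ k A, ← add_smul]
    congr 1
    rw [hs]
    push_cast
    ring
  rw [hsplit, Matrix.exp_add_of_commute _ _ hcomm, Matrix.exp_nsmul]
  refine le_trans (Matrix.linfty_opNorm_mul _ _) ?_
  have hb2 : ‖NormedSpace.exp ((s:ℂ) • A)‖ ≤ Real.exp ‖A‖ := by
    refine (aux_norm_exp_le hn _).trans (Real.exp_le_exp.mpr ?_)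
    rw [norm_smul]
    have h1 : ‖((s:ℝ):ℂ)‖ ≤ 1 := by
      rw [Complex.norm_real, Real.norm_eq_abs, abs_of_nonneg hs0]
      exact hs1
    calc ‖((s:ℝ):ℂ)‖ * ‖A‖ ≤ 1 * ‖A‖ := mul_le_mul_of_nonneg_right h1 (norm_nonneg A)
      _ = ‖A‖ := one_mul _
  have hb3 : Real.exp (-(a * k)) ≤ Real.exp a * Real.exp (-a * t) := by
    rw [← Real.exp_add]
    refine Real.exp_le_exp.mpr ?_
    nlinarith
  have h8 : ‖NormedSpace.exp A ^ k‖ * ‖NormedSpace.exp ((s:ℂ) • A)‖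
      ≤ (C * Real.exp (-(a * k))) * Real.exp ‖A‖ :=
    mul_le_mul (hCk k) hb2 (norm_nonneg _) (by positivity)
  refine le_trans h8 ?_
  have h9 : C * Real.exp (-(a * k)) ≤ C * (Real.exp a * Real.exp (-a * t)) :=
    mul_le_mul_of_nonneg_left hb3 hC0.le
  calc (C * Real.exp (-(a * k))) * Real.exp ‖A‖
      ≤ (C * (Real.exp a * Real.exp (-a * t))) * Real.exp ‖A‖ :=
        mul_le_mul_of_nonneg_right h9 (Real.exp_pos _).le
    _ = C * Real.exp ‖A‖ * Real.exp a * Real.exp (-a * t) := by ring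

end Aux


/-- Exponential decay of the matrix exponential: if every eigenvalue `μ` of `A`
satisfies `Re μ < −a` with `a > 0`, then there is `c > 0` such that
`‖exp(tA)‖ ≤ c e^{−a t}` for all `t ≥ 0`. -/
theorem stmt13 (n : ℕ) (hn : 1 ≤ n) (A : Matrix (Fin n) (Fin n) ℂ)
    (a : ℝ) (ha : 0 < a) (hspec : ∀ μ ∈ spectrum ℂ A, μ.re < -a) :
    ∃ c : ℝ, 0 < c ∧ ∀ t : ℝ, 0 ≤ t →
      ‖NormedSpace.exp ((t : ℂ) • A)‖ ≤ c * Real.exp (-a * t) :=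
  aux_main hn A a ha hspec
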